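/- For the binary-cycling example, the kernel \tilde{K}(x,y) = K(x, g^{-1}y) satisfies (\tilde{K} − Π)^N = 0, where Π is the kernel with all entries equal to 2^{−N}; i.e., \tilde{K} − Π is nilpotent of index at most N. -/
import Mathlib

open BigOperators Finset

def Kseq {V : Type*} [Fintype V] (K : Matrix V V ℝ) (g : Equiv.Perm V) (i : ℕ) :
    Matrix V V ℝ :=
  Matrix.of fun x y => K ((g ^ (i - 1)) x) ((g ^ (i - 1)) y)

def Kcomp {V : Type*} [Fintype V] [DecidableEq V] (K : Matrix V V ℝ) (g : Equiv.Perm V) :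
    ℕ → Matrix V V ℝ
  | 0 => 1
  | n + 1 => Kcomp K g n * Kseq K g (n + 1)

def tilde {V : Type*} [Fintype V] (K : Matrix V V ℝ) (g : Equiv.Perm V) : Matrix V V ℝ :=
  Matrix.of fun x y => K x (g.symm y)

/-- Standard basis vector of {0,1}^N with a 1 in position j. -/
def eVec (N : ℕ) (j : Fin N) : Fin N → ZMod 2 := fun k => if k = j then 1 else 0

/-- The kernel randomizing the first coordinate of a binary vector. -/
noncomputable def Kbin (N : ℕ) [NeZero N] : Matrix (Fin N → ZMod 2) (Fin N → ZMod 2) ℝ :=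
  Matrix.of fun x y => if y = x ∨ y = x + eVec N 0 then 1 / 2 else 0

/-- The cyclic left shift g(x₁,…,x_N) = (x₂,…,x_N,x₁). -/
def shiftL (N : ℕ) : Equiv.Perm (Fin N → ZMod 2) :=
  Equiv.arrowCongr (finRotate N).symm (Equiv.refl (ZMod 2))

/- ######## auxiliary material ######## -/

lemma zmod2_add_one_iff : ∀ u v : ZMod 2, (u + 1 = v ↔ ¬ (u = v)) := by decide
lemma zmod2_aa : ∀ u : ZMod 2, u + 1 + 1 = u := by decide

section Aux
variable (N : ℕ) [NeZero N]

lemma eVec_cancel (v : Fin N → ZMod 2) : v + eVec N 0 + eVec N 0 = v := by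
  funext k
  simp only [Pi.add_apply, eVec]
  split <;> simp [zmod2_aa]

lemma eVec_ne (v : Fin N → ZMod 2) : v ≠ v + eVec N 0 := by
  intro h
  have := congrFun h 0
  simp [eVec] at this

lemma frs_zero (h : 0 < N) : (finRotate N).symm ⟨0, h⟩ = ⟨N-1, by omega⟩ := by
  obtain ⟨m, rfl⟩ : ∃ m, N = m+1 := ⟨N-1, by omega⟩
  rw [Equiv.symm_apply_eq, finRotate_succ_apply]
  apply Fin.ext
  simp [Fin.add_def]

lemma frs_succ (j : ℕ) (h : j+1 < N) : (finRotate N).symm ⟨j+1, h⟩ = ⟨j, by omega⟩ := by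
  obtain ⟨m, rfl⟩ : ∃ m, N = m+1 := ⟨N-1, by omega⟩
  rw [Equiv.symm_apply_eq, finRotate_succ_apply]
  apply Fin.ext
  simp [Fin.add_def, Nat.mod_eq_of_lt h]

/-- the agreement condition describing entries of the n-th power -/
def Pcond (n : ℕ) (x y : Fin N → ZMod 2) : Prop :=
  ∀ k m : Fin N, (m : ℕ) = (k : ℕ) + n → y k = x m

instance (n : ℕ) (x y : Fin N → ZMod 2) : Decidable (Pcond N n x y) := by
  unfold Pcond; infer_instance

lemma Kt_split (z y : Fin N → ZMod 2) :
    tilde (Kbin N) (shiftL N) z y =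
      (if z = (shiftL N).symm y then (1:ℝ)/2 else 0) +
      (if z = (shiftL N).symm y + eVec N 0 then (1:ℝ)/2 else 0) := by
  show (if (shiftL N).symm y = z ∨ (shiftL N).symm y = z + eVec N 0 then (1:ℝ)/2 else 0) = _
  have hne : z = (shiftL N).symm y → z = (shiftL N).symm y + eVec N 0 → False := by
    intro h1 h2; exact eVec_ne N _ (h1 ▸ h2)
  by_cases h1 : z = (shiftL N).symm y <;> by_cases h2 : z = (shiftL N).symm y + eVec N 0
  · exact absurd h2 fun h => hne h1 h
  · rw [if_pos (Or.inl h1.symm), if_pos h1, if_neg h2]; ring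
  · have : (shiftL N).symm y = z + eVec N 0 := by rw [h2, eVec_cancel]
    rw [if_pos (Or.inr this), if_neg h1, if_pos h2]; ring
  · rw [if_neg, if_neg h1, if_neg h2]
    · ring
    · rintro (h | h)
      · exact h1 h.symm
      · exact h2 (by rw [← h.symm, eVec_cancel] )

lemma Kt_split' (x y : Fin N → ZMod 2) :
    tilde (Kbin N) (shiftL N) x y =
      (if y = shiftL N x then (1:ℝ)/2 else 0) +
      (if y = shiftL N (x + eVec N 0) then (1:ℝ)/2 else 0) := by
  rw [Kt_split]
  congr 1 <;> apply if_congr _ rfl rfl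
  · rw [eq_comm, Equiv.symm_apply_eq, eq_comm]
  · constructor
    · intro h
      have h2 : (shiftL N).symm y = x + eVec N 0 := by rw [h, eVec_cancel]
      exact (Equiv.symm_apply_eq _).mp h2
    · intro h
      have h2 : (shiftL N).symm y = x + eVec N 0 := (Equiv.symm_apply_eq _).mpr h
      rw [h2, eVec_cancel]

lemma pow_succ_entry (n : ℕ) (x y : Fin N → ZMod 2) :
    (tilde (Kbin N) (shiftL N) ^ (n+1)) x y =
      (1/2) * ((tilde (Kbin N) (shiftL N) ^ n) x ((shiftL N).symm y)
        + (tilde (Kbin N) (shiftL N) ^ n) x ((shiftL N).symm y + eVec N 0)) := by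
  rw [pow_succ, Matrix.mul_apply]
  simp_rw [Kt_split, mul_add, Finset.sum_add_distrib, mul_ite, mul_zero]
  rw [Finset.sum_ite_eq' univ, Finset.sum_ite_eq' univ]
  simp; ring

lemma P_a (n : ℕ) (hn : n < N) (x y : Fin N → ZMod 2) :
    Pcond N n x ((shiftL N).symm y) ↔
      (y ⟨N-1, by omega⟩ = x ⟨n, hn⟩ ∧ Pcond N (n+1) x y) := by
  have ha : ∀ k : Fin N, (shiftL N).symm y k = y ((finRotate N).symm k) := fun _ => rfl
  constructor
  · intro H
    refine ⟨?_, ?_⟩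
    · have := H ⟨0, by omega⟩ ⟨n, hn⟩ (by simp)
      rwa [ha, frs_zero] at this
    · intro k m hm
      have hk1 : (k : ℕ) + 1 < N := by have := m.isLt; omega
      have := H ⟨(k:ℕ)+1, hk1⟩ m (by simp; omega)
      rwa [ha, frs_succ N _ hk1, Fin.eta] at this
  · rintro ⟨h0, H⟩ k m hm
    rw [ha]
    rcases Nat.eq_zero_or_pos (k : ℕ) with hk | hk
    · have hk' : k = ⟨0, by omega⟩ := Fin.ext hk
      have hm' : m = ⟨n, hn⟩ := Fin.ext (by simp only [Fin.val_mk]; omega)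
      rw [hk', hm', frs_zero]; exact h0
    · obtain ⟨j, hj⟩ : ∃ j, (k:ℕ) = j + 1 := ⟨(k:ℕ)-1, by omega⟩
      have hkk : k = ⟨j+1, by omega⟩ := Fin.ext hj
      rw [hkk, frs_succ]
      exact H ⟨j, by omega⟩ m (by simp only [Fin.val_mk]; omega)

lemma P_b (n : ℕ) (hn : n < N) (x y : Fin N → ZMod 2) :
    Pcond N n x ((shiftL N).symm y + eVec N 0) ↔
      (y ⟨N-1, by omega⟩ + 1 = x ⟨n, hn⟩ ∧ Pcond N (n+1) x y) := by
  have ha : ∀ k : Fin N, ((shiftL N).symm y + eVec N 0) k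
      = y ((finRotate N).symm k) + (if k = 0 then 1 else 0) := fun _ => rfl
  constructor
  · intro H
    refine ⟨?_, ?_⟩
    · have := H ⟨0, by omega⟩ ⟨n, hn⟩ (by simp)
      rw [ha, frs_zero, if_pos (by apply Fin.ext; simp)] at this
      exact this
    · intro k m hm
      have hk1 : (k : ℕ) + 1 < N := by have := m.isLt; omega
      have := H ⟨(k:ℕ)+1, hk1⟩ m (by simp; omega)
      rw [ha, frs_succ N _ hk1, Fin.eta, if_neg (by intro h; have := congrArg Fin.val h; simp at this), add_zero] at this
      exact this
  · rintro ⟨h0, H⟩ k m hm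
    rw [ha]
    rcases Nat.eq_zero_or_pos (k : ℕ) with hk | hk
    · have hk' : k = ⟨0, by omega⟩ := Fin.ext hk
      have hm' : m = ⟨n, hn⟩ := Fin.ext (by simp only [Fin.val_mk]; omega)
      rw [hk', hm', frs_zero, if_pos (by apply Fin.ext; simp)]
      exact h0
    · obtain ⟨j, hj⟩ : ∃ j, (k:ℕ) = j + 1 := ⟨(k:ℕ)-1, by omega⟩
      have hkk : k = ⟨j+1, by omega⟩ := Fin.ext hj
      rw [hkk, frs_succ, if_neg (by intro h; have := congrArg Fin.val h; simp at this), add_zero]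
      exact H ⟨j, by omega⟩ m (by simp only [Fin.val_mk]; omega)

lemma pow_entry (n : ℕ) (hn : n ≤ N) (x y : Fin N → ZMod 2) :
    (tilde (Kbin N) (shiftL N) ^ n) x y = if Pcond N n x y then (1/2:ℝ)^n else 0 := by
  induction n generalizing y with
  | zero =>
    rw [pow_zero, Matrix.one_apply]
    have : Pcond N 0 x y ↔ x = y := by
      constructor
      · intro H; funext k; exact (H k k (by simp)).symm
      · rintro rfl k m hm
        congr 1; exact Fin.ext (by omega)
    simp [this]
  | succ n ih =>
    have hn' : n < N := hn
    rw [pow_succ_entry, ih (by omega), ih (by omega), if_congr (P_a N n hn' x y) rfl rfl,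
      if_congr (P_b N n hn' x y) rfl rfl]
    by_cases hC : Pcond N (n+1) x y <;>
      by_cases hA : y ⟨N-1, by omega⟩ = x ⟨n, hn'⟩ <;>
        simp [hC, hA, zmod2_add_one_iff, pow_succ] <;> ring

end Aux

/-- Example 3.9: K̃ - Π is nilpotent of index at most N, where Π is the uniform kernel. -/
theorem stmt15 (N : ℕ) [NeZero N]
    (Pi : Matrix (Fin N → ZMod 2) (Fin N → ZMod 2) ℝ)
    (hPi : ∀ x y, Pi x y = 1 / 2 ^ N) :
    (tilde (Kbin N) (shiftL N) - Pi) ^ N = 0 := by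
  set Kt := tilde (Kbin N) (shiftL N) with hKt
  have rowsum : ∀ x, ∑ y, Kt x y = 1 := by
    intro x
    simp_rw [hKt, Kt_split']
    rw [Finset.sum_add_distrib, Finset.sum_ite_eq' univ, Finset.sum_ite_eq' univ]
    simp; ring
  have colsum : ∀ y, ∑ z, Kt z y = 1 := by
    intro y
    simp_rw [hKt, Kt_split]
    rw [Finset.sum_add_distrib, Finset.sum_ite_eq' univ, Finset.sum_ite_eq' univ]
    simp; ring
  have card2 : (Fintype.card (Fin N → ZMod 2) : ℝ) = 2 ^ N := by
    simp [Fintype.card_fun]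
  have hKP : Kt * Pi = Pi := by
    ext x y
    rw [Matrix.mul_apply]
    simp_rw [hPi]
    rw [← Finset.sum_mul, rowsum, one_mul]
  have hPK : Pi * Kt = Pi := by
    ext x y
    rw [Matrix.mul_apply]
    simp_rw [hPi]
    rw [← Finset.mul_sum, colsum, mul_one]
  have hPP : Pi * Pi = Pi := by
    ext x y
    rw [Matrix.mul_apply]
    simp_rw [hPi]
    rw [Finset.sum_const, card_univ, nsmul_eq_mul, card2]
    have h2 : (2:ℝ)^N ≠ 0 := by positivity
    field_simp
  have hKnP : ∀ n, Kt ^ n * Pi = Pi := by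
    intro n
    induction n with
    | zero => simp
    | succ n ih => rw [pow_succ, mul_assoc, hKP, ih]
  have key : ∀ n, (Kt - Pi) ^ (n+1) = Kt ^ (n+1) - Pi := by
    intro n
    induction n with
    | zero => simp
    | succ n ih =>
      have h1 : (Kt - Pi) ^ (n+1+1) = (Kt - Pi) ^ (n+1) * (Kt - Pi) := pow_succ _ _
      rw [h1, ih, sub_mul, mul_sub, mul_sub, hKnP, hPK, hPP, ← pow_succ]
      abel
  have hpos : 1 ≤ N := Nat.one_le_iff_ne_zero.mpr (NeZero.ne N)
  have key' := key (N-1)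
  rw [Nat.sub_add_cancel hpos] at key'
  rw [key']
  ext x y
  have hN : Pcond N N x y := by
    intro k mm h
    have := mm.isLt
    omega
  rw [Matrix.sub_apply, hKt, pow_entry N N le_rfl x y, if_pos hN, hPi]
  simp [div_pow]
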